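/- Let Y be a countable sample space and let every P in H0 have full support on Y. Suppose S is a sharp e-variable for H0 (E_{P0}[S] = 1 for some P0 ∈ H0), and δ is a Type-I risk safe decision rule such that for some function B : Y → 𝓑 we have L_{B(y)}(δ_{B(y)}(y)) = S(y) for all y. Then δ is fully compatible with S: for all b ∈ 𝓑 and all y ∈ Y, L_b(δ_b(y)) ≤ S(y). -/

import Mathlib

open MeasureTheory ENNReal

/-- Equalizing maximal compatibility lemma, countable case: if S is a
sharp e-variable for H0 (full support on countable Y), δ is Type-I risk safe, and for
some B : Y → 𝓑 we have L_{B(y)}(δ_{B(y)}(y)) = S(y) for all y, then δ is fully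
compatible with S. -/
theorem equalizer_lemma_countable {Y 𝓑 : Type*} [Countable Y] [MeasurableSpace Y]
    [MeasurableSingletonClass Y]
    (H0 : Set (Measure Y)) (hprob : ∀ P ∈ H0, IsProbabilityMeasure P)
    (hfull : ∀ P ∈ H0, ∀ y : Y, 0 < P {y})
    (A : 𝓑 → Type*) (L : (b : 𝓑) → A b → ℝ≥0∞) (δ : (b : 𝓑) → Y → A b)
    (S : Y → ℝ≥0∞) (hSm : Measurable S)
    (hSe : ∀ P ∈ H0, ∫⁻ y, S y ∂P ≤ 1)
    (hsharp : ∃ P0 ∈ H0, ∫⁻ y, S y ∂P0 = 1)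
    (hsafe : ∃ S' : Y → ℝ≥0∞, Measurable S' ∧ (∀ P ∈ H0, ∫⁻ y, S' y ∂P ≤ 1) ∧
      ∀ y : Y, ∀ b : 𝓑, L b (δ b y) ≤ S' y)
    (B : Y → 𝓑) (heq : ∀ y : Y, L (B y) (δ (B y) y) = S y) :
    ∀ b : 𝓑, ∀ y : Y, L b (δ b y) ≤ S y := by
  obtain ⟨S', hS'm, hS'e, hS'le⟩ := hsafe
  obtain ⟨P0, hP0, hP0int⟩ := hsharp
  -- S ≤ S' everywhere
  have hle : ∀ y, S y ≤ S' y := fun y => (heq y) ▸ hS'le y (B y)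
  -- integrals coincide
  have hae : S =ᵐ[P0] S' :=
    ae_eq_of_ae_le_of_lintegral_le (ae_of_all _ hle)
      (by rw [hP0int]; exact one_ne_top) hS'm.aemeasurable
      (le_trans (hS'e P0 hP0) hP0int.ge)
  -- a.e. equality + full support ⇒ everywhere
  have heqS : ∀ y, S y = S' y := by
    intro y
    by_contra hne
    have h0 : P0 {x | ¬ S x = S' x} = 0 := hae
    have : P0 {y} ≤ P0 {x | ¬ S x = S' x} :=
      measure_mono (by intro z hz; simp_all)
    rw [h0] at this
    exact absurd (le_antisymm this bot_le) (hfull P0 hP0 y).ne'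
  intro b y
  rw [heqS y]
  exact hS'le y b
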